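/- Let F(u) = u + F where F is the matrix of generators of g_N, let R(u) = 1 - P/u + Q/(u - κ) with κ = N/2 ∓ 1, and set U = Q (F_1 + κ) F_2 - F_2 (F_1 + κ) Q. Then R(u-v) F_1(u) F_2(v) - F_2(v) F_1(u) R(u-v) = U/(u - v - κ), as an identity of rational functions with values in End(C^N) ⊗ End(C^N) ⊗ U(g_N). -/

import Mathlib

open Matrix
open scoped Kronecker BigOperators

noncomputable section

/-- The permutation operator `P = Σ_{i,j} e_{ij} ⊗ e_{ji}` on `ℂ^N ⊗ ℂ^N`. -/
def Pop (N : ℕ) : Matrix (Fin N × Fin N) (Fin N × Fin N) ℂ :=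
  ∑ i : Fin N, ∑ j : Fin N,
    (Matrix.single i j (1 : ℂ)) ⊗ₖ (Matrix.single j i (1 : ℂ))

/-- The partial transpose `P^t = Σ_{i,j} e_{ij} ⊗ e_{ij}`. -/
def Ptop (N : ℕ) : Matrix (Fin N × Fin N) (Fin N × Fin N) ℂ :=
  ∑ i : Fin N, ∑ j : Fin N,
    (Matrix.single i j (1 : ℂ)) ⊗ₖ (Matrix.single i j (1 : ℂ))

/-- `Q = G₁ P^t G₁⁻¹`. -/
def Qop (N : ℕ) (G : Matrix (Fin N) (Fin N) ℂ) : Matrix (Fin N × Fin N) (Fin N × Fin N) ℂ :=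
  (G ⊗ₖ (1 : Matrix (Fin N) (Fin N) ℂ)) * Ptop N * (G⁻¹ ⊗ₖ (1 : Matrix (Fin N) (Fin N) ℂ))

variable {N : ℕ} {A : Type*}

/-- Embedding `M ↦ M ⊗ 1` of an `A`-valued matrix into the first tensor factor. -/
def emb1 [Ring A] (M : Matrix (Fin N) (Fin N) A) :
    Matrix (Fin N × Fin N) (Fin N × Fin N) A :=
  Matrix.of fun p q => if p.2 = q.2 then M p.1 q.1 else 0

/-- Embedding `M ↦ 1 ⊗ M` of an `A`-valued matrix into the second tensor factor. -/
def emb2 [Ring A] (M : Matrix (Fin N) (Fin N) A) :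
    Matrix (Fin N × Fin N) (Fin N × Fin N) A :=
  Matrix.of fun p q => if p.1 = q.1 then M p.2 q.2 else 0

lemma Pop_apply (i k j l : Fin N) :
    Pop N (i,k) (j,l) = if i = l ∧ k = j then 1 else 0 := by
  simp [Pop, Matrix.sum_apply, kroneckerMap_apply, Matrix.single, ite_and]
  aesop

lemma Ptop_apply (i k j l : Fin N) :
    Ptop N (i,k) (j,l) = if i = k ∧ j = l then 1 else 0 := by
  simp [Ptop, Matrix.sum_apply, kroneckerMap_apply, Matrix.single, ite_and]
  aesop

lemma Qop_apply (G : Matrix (Fin N) (Fin N) ℂ) (i k j l : Fin N) :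
    Qop N G (i,k) (j,l) = G i k * G⁻¹ l j := by
  simp [Qop, Matrix.mul_apply, Fintype.sum_prod_type, Ptop_apply, kroneckerMap_apply,
    Matrix.one_apply, ite_and]

section withA
variable [Ring A] [Algebra ℂ A]

local notation "φ" => algebraMap ℂ A

lemma hPP_lem : (Pop N).map φ * (Pop N).map φ = 1 := by
  ext ⟨i,k⟩ ⟨j,l⟩
  simp [Matrix.mul_apply, Matrix.map_apply, Pop_apply, Fintype.sum_prod_type,
    apply_ite φ, ite_and, Matrix.one_apply, Prod.ext_iff]

lemma hxP_lem (F : Matrix (Fin N) (Fin N) A) :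
    emb1 F * (Pop N).map φ = (Pop N).map φ * emb2 F := by
  ext ⟨i,k⟩ ⟨j,l⟩
  simp [Matrix.mul_apply, Matrix.map_apply, Pop_apply, emb1, emb2, Fintype.sum_prod_type,
    apply_ite φ, ite_and]

lemma hyP_lem (F : Matrix (Fin N) (Fin N) A) :
    emb2 F * (Pop N).map φ = (Pop N).map φ * emb1 F := by
  ext ⟨i,k⟩ ⟨j,l⟩
  simp [Matrix.mul_apply, Matrix.map_apply, Pop_apply, emb1, emb2, Fintype.sum_prod_type,
    apply_ite φ, ite_and]


end withA

section cx
variable (G : Matrix (Fin N) (Fin N) ℂ) (e : ℂ)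

lemma hGinvT (hG : IsUnit G.det) (hGT : Gᵀ = e • G) (he2 : e * e = 1) :
    (G⁻¹)ᵀ = e • G⁻¹ := by
  rw [Matrix.transpose_nonsing_inv, hGT]
  apply Matrix.inv_eq_right_inv
  rw [Matrix.smul_mul, Matrix.mul_smul, Matrix.mul_nonsing_inv G hG, smul_smul, he2, one_smul]

lemma hPQ_lem (hGT : Gᵀ = e • G) : Pop N * Qop N G = e • Qop N G := by
  ext ⟨i,k⟩ ⟨j,l⟩
  have hG' : G k i = e * G i k := by
    have := congrFun (congrFun hGT i) k
    simpa [Matrix.transpose_apply] using this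
  simp [Matrix.mul_apply, Pop_apply, Qop_apply, Fintype.sum_prod_type, ite_and, hG']
  ring

lemma hQP_lem (hG : IsUnit G.det) (hGT : Gᵀ = e • G) (he2 : e * e = 1) :
    Qop N G * Pop N = e • Qop N G := by
  ext ⟨i,k⟩ ⟨j,l⟩
  have hG' : G⁻¹ j l = e * G⁻¹ l j := by
    have := congrFun (congrFun (hGinvT G e hG hGT he2) l) j
    simpa [Matrix.transpose_apply] using this
  simp [Matrix.mul_apply, Pop_apply, Qop_apply, Fintype.sum_prod_type, ite_and, hG']
  ring

end cx

section withA2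
variable [Ring A] [Algebra ℂ A]
local notation "φ" => algebraMap ℂ A

lemma hQy_lem (G : Matrix (Fin N) (Fin N) ℂ) (hG : IsUnit G.det)
    (F : Matrix (Fin N) (Fin N) A)
    (hskew : F + G.map φ * Fᵀ * (G⁻¹).map φ = 0) :
    (Qop N G).map φ * emb2 F = -((Qop N G).map φ * emb1 F) := by
  have hS1 : (G⁻¹).map φ * F + Fᵀ * (G⁻¹).map φ = 0 := by
    have h := congrArg (fun M => (G⁻¹).map φ * M) hskew
    simp only [mul_add, mul_zero] at h
    rw [← Matrix.mul_assoc, ← Matrix.mul_assoc, ← Matrix.map_mul,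
      Matrix.nonsing_inv_mul G hG, Matrix.map_one φ (map_zero φ) (map_one φ),
      Matrix.one_mul] at h
    exact h
  have h2 : ∀ a b : Fin N, (∑ q, φ (G⁻¹ q b) * F q a) = -∑ p, φ (G⁻¹ a p) * F p b := by
    intro a b
    have h := congrFun (congrFun hS1 a) b
    simp only [Matrix.add_apply, Matrix.mul_apply, Matrix.map_apply, Matrix.transpose_apply,
      Matrix.zero_apply] at h
    have comm : (∑ q, φ (G⁻¹ q b) * F q a) = ∑ q, F q a * φ (G⁻¹ q b) :=
      Finset.sum_congr rfl (fun q _ => (Algebra.commutes _ _))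
    rw [comm]
    exact eq_neg_of_add_eq_zero_right h
  ext ⟨i,k⟩ ⟨j,l⟩
  simp only [Matrix.mul_apply, Matrix.map_apply, Matrix.neg_apply, Qop_apply, emb1, emb2,
    Matrix.of_apply, Fintype.sum_prod_type, _root_.map_mul, mul_ite, ite_mul, mul_zero, zero_mul,
    Finset.sum_ite_irrel, Finset.sum_const_zero, Finset.sum_ite_eq, Finset.sum_ite_eq']
  simp only [Finset.mem_univ, if_true, mul_assoc, ← Finset.mul_sum, ← Finset.sum_neg_distrib]
  rw [h2 l j]
  simp [Finset.mul_sum]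

lemma hyQ_lem (G : Matrix (Fin N) (Fin N) ℂ) (hG : IsUnit G.det)
    (F : Matrix (Fin N) (Fin N) A)
    (hskew : F + G.map φ * Fᵀ * (G⁻¹).map φ = 0) :
    emb2 F * (Qop N G).map φ = -(emb1 F * (Qop N G).map φ) := by
  have hS2 : F * G.map φ + G.map φ * Fᵀ = 0 := by
    have h := congrArg (fun M => M * G.map φ) hskew
    simp only [add_mul, zero_mul] at h
    rw [Matrix.mul_assoc (G.map φ * Fᵀ), ← Matrix.map_mul,
      Matrix.nonsing_inv_mul G hG, Matrix.map_one φ (map_zero φ) (map_one φ),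
      Matrix.mul_one] at h
    exact h
  have h3 : ∀ a b : Fin N, (∑ q, F a q * φ (G b q)) = -∑ p, F b p * φ (G p a) := by
    intro a b
    have h := congrFun (congrFun hS2 b) a
    simp only [Matrix.add_apply, Matrix.mul_apply, Matrix.map_apply, Matrix.transpose_apply,
      Matrix.zero_apply] at h
    have comm : (∑ q, F a q * φ (G b q)) = ∑ q, φ (G b q) * F a q :=
      Finset.sum_congr rfl (fun q _ => (Algebra.commutes _ _).symm)
    rw [comm]
    exact eq_neg_of_add_eq_zero_right h
  ext ⟨i,k⟩ ⟨j,l⟩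
  simp only [Matrix.mul_apply, Matrix.map_apply, Matrix.neg_apply, Qop_apply, emb1, emb2,
    Matrix.of_apply, Fintype.sum_prod_type, _root_.map_mul, mul_ite, ite_mul, mul_zero, zero_mul,
    Finset.sum_ite_irrel, Finset.sum_const_zero, Finset.sum_ite_eq, Finset.sum_ite_eq']
  simp only [Finset.mem_univ, if_true]
  simp only [← mul_assoc, ← Finset.sum_mul, ← Finset.sum_neg_distrib]
  rw [h3 k i]
  simp

end withA2

set_option maxHeartbeats 1600000 in
lemma key {M : Type*} [Ring M] [Algebra ℂ M] (p q x y : M) (e κ u v : ℂ)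
    (hPP : p * p = 1) (hPQ : p * q = e • q) (hQP : q * p = e • q)
    (hxP : x * p = p * y) (hyP : y * p = p * x)
    (hQy : q * y = -(q * x)) (hyQ : y * q = -(x * q))
    (hc : x * y - y * x = x * (p - q) - (p - q) * x)
    (hz : u - v ≠ 0) (hw : u - v - κ ≠ 0) :
    (1 - (u - v)⁻¹ • p + (u - v - κ)⁻¹ • q) * (u • 1 + x) * (v • 1 + y)
      - (v • 1 + y) * (u • 1 + x) * (1 - (u - v)⁻¹ • p + (u - v - κ)⁻¹ • q)
    = (u - v - κ)⁻¹ • (q * (x + κ • 1) * y - y * (x + κ • 1) * q) := by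
  have hxy : x * y = y * x + p * y - x * q - p * x + q * x := by
    have h := hc
    rw [mul_sub, sub_mul, hxP] at h
    linear_combination (norm := noncomm_ring) h
  have hPPt : ∀ t : M, p * (p * t) = t := fun t => by rw [← mul_assoc, hPP, one_mul]
  have hPQt : ∀ t : M, p * (q * t) = e • (q * t) := fun t => by
    rw [← mul_assoc, hPQ, smul_mul_assoc]
  have hQPt : ∀ t : M, q * (p * t) = e • (q * t) := fun t => by
    rw [← mul_assoc, hQP, smul_mul_assoc]
  have hxPt : ∀ t : M, x * (p * t) = p * (y * t) := fun t => by
    rw [← mul_assoc, hxP, mul_assoc]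
  have hyPt : ∀ t : M, y * (p * t) = p * (x * t) := fun t => by
    rw [← mul_assoc, hyP, mul_assoc]
  have hQyt : ∀ t : M, q * (y * t) = -(q * (x * t)) := fun t => by
    rw [← mul_assoc, hQy, neg_mul, mul_assoc]
  have hyQt : ∀ t : M, y * (q * t) = -(x * (q * t)) := fun t => by
    rw [← mul_assoc, hyQ, neg_mul, mul_assoc]
  have hxyt : ∀ t : M, x * (y * t)
      = y * (x * t) + p * (y * t) - x * (q * t) - p * (x * t) + q * (x * t) := fun t => by
    rw [← mul_assoc, hxy]; noncomm_ring
  simp only [mul_add, add_mul, mul_sub, sub_mul, smul_mul_assoc, mul_smul_comm, mul_one,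
    one_mul, mul_assoc, smul_add, smul_sub, smul_smul, smul_neg, mul_neg, neg_mul]
  simp only [hxy, hxyt, hPP, hPPt, hPQ, hPQt, hQP, hQPt, hxP, hxPt, hyP, hyPt, hQy, hQyt, hyQt, hyQ,
    mul_add, add_mul, mul_sub, sub_mul, smul_mul_assoc, mul_smul_comm, mul_one,
    one_mul, mul_assoc, smul_add, smul_sub, smul_smul, smul_neg, mul_neg, neg_mul]
  have hz' : -v + u ≠ 0 := by rw [neg_add_eq_sub]; exact hz
  have hw' : -v + (u - κ) ≠ 0 := by
    have : -v + (u - κ) = u - v - κ := by ring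
    rw [this]; exact hw
  have hw'' : u + (-v - κ) ≠ 0 := by
    have : u + (-v - κ) = u - v - κ := by ring
    rw [this]; exact hw
  have hw''' : -v + u - κ ≠ 0 := by
    have : -v + u - κ = u - v - κ := by ring
    rw [this]; exact hw
  match_scalars
  all_goals try ring
  all_goals field_simp [hz', hw', hw'', hw''']
  all_goals ring

/-- Let `F(u) = u + F` where `F` is the matrix of generators of `𝔤_N`, let
`R(u) = 1 - P/u + Q/(u-κ)` with `κ = N/2 ∓ 1`, and set
`U = Q(F₁ + κ)F₂ - F₂(F₁ + κ)Q`.  Then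
`R(u-v) F₁(u) F₂(v) - F₂(v) F₁(u) R(u-v) = U/(u - v - κ)`. -/
theorem RFF_identity [Ring A] [Algebra ℂ A]
    (G : Matrix (Fin N) (Fin N) ℂ) (hG : IsUnit G.det)
    (e : ℂ) (he : (e = 1 ∧ Gᵀ = G) ∨ (e = -1 ∧ Gᵀ = -G))
    (F : Matrix (Fin N) (Fin N) A)
    (hskew : F + G.map (algebraMap ℂ A) * Fᵀ * (G⁻¹).map (algebraMap ℂ A) = 0)
    (hcomm : emb1 F * emb2 F - emb2 F * emb1 F =
      emb1 F * ((Pop N).map (algebraMap ℂ A) - (Qop N G).map (algebraMap ℂ A)) -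
      ((Pop N).map (algebraMap ℂ A) - (Qop N G).map (algebraMap ℂ A)) * emb1 F)
    (u v : ℂ) (huv : u - v ≠ 0) (huvk : u - v - ((N : ℂ) / 2 - e) ≠ 0) :
    let κ : ℂ := (N : ℂ) / 2 - e
    let PA := (Pop N).map (algebraMap ℂ A)
    let QA := (Qop N G).map (algebraMap ℂ A)
    let R : Matrix (Fin N × Fin N) (Fin N × Fin N) A :=
      1 - (u - v)⁻¹ • PA + (u - v - κ)⁻¹ • QA
    let U : Matrix (Fin N × Fin N) (Fin N × Fin N) A :=
      QA * (emb1 F + κ • 1) * emb2 F - emb2 F * (emb1 F + κ • 1) * QA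
    R * (u • 1 + emb1 F) * (v • 1 + emb2 F) - (v • 1 + emb2 F) * (u • 1 + emb1 F) * R =
      (u - v - κ)⁻¹ • U := by
  intro κ PA QA R U
  have he2 : e * e = 1 := by rcases he with ⟨h1, _⟩ | ⟨h1, _⟩ <;> subst h1 <;> norm_num
  have hGT : Gᵀ = e • G := by
    rcases he with ⟨h1, h2⟩ | ⟨h1, h2⟩ <;> subst h1 <;> simp [h2]
  have hsm : ∀ (M : Matrix (Fin N × Fin N) (Fin N × Fin N) ℂ),
      (e • M).map (algebraMap ℂ A) = e • M.map (algebraMap ℂ A) := by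
    intro M; ext i j
    show (algebraMap ℂ A) (e * M i j) = e • (algebraMap ℂ A) (M i j)
    rw [_root_.map_mul, ← Algebra.smul_def]
  have hPPA : PA * PA = 1 := hPP_lem
  have hPQA : PA * QA = e • QA := by
    show (Pop N).map (algebraMap ℂ A) * (Qop N G).map (algebraMap ℂ A) = _
    rw [← Matrix.map_mul, hPQ_lem G e hGT, hsm]
  have hQPA : QA * PA = e • QA := by
    show (Qop N G).map (algebraMap ℂ A) * (Pop N).map (algebraMap ℂ A) = _
    rw [← Matrix.map_mul, hQP_lem G e hG hGT he2, hsm]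
  exact key PA QA (emb1 F) (emb2 F) e κ u v hPPA hPQA hQPA (hxP_lem F) (hyP_lem F)
    (hQy_lem G hG F hskew) (hyQ_lem G hG F hskew) hcomm huv huvk

end
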